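/- Let X be an EFX allocation (possibly partial) of a non-degenerate fair division instance such that the envy graph E_X contains a directed cycle. Then there exists another EFX allocation Y (allocating the same goods) such that Y Pareto dominates X. -/

import Mathlib

section CycleExtract

variable {α : Type*} {R : α → α → Prop}

lemma transGen_chain {a b : α} (h : Relation.TransGen R a b) :
    ∃ l : List α, l ≠ [] ∧ List.Chain R a l ∧ (a :: l).getLast? = some b := by
  induction h with
  | single hr => exact ⟨[_], by simp, List.Chain.cons hr List.Chain.nil, by simp⟩
  | @tail b c _ hr ih =>
    obtain ⟨l, hne, hch, hlast⟩ := ih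
    refine ⟨l ++ [c], by simp, ?_, by rw [← List.cons_append, List.getLast?_concat]⟩
    have : List.Chain' R ((a :: l) ++ [c]) := by
      refine List.IsChain.append hch (List.isChain_singleton _) ?_
      intro x hx y hy
      simp only [List.head?_cons, Option.mem_def, Option.some.injEq] at hy
      rw [hlast] at hx
      simp only [Option.mem_def, Option.some.injEq] at hx
      subst hx; subst hy; exact hr
    exact this

lemma exists_dup_split {l : List α} (h : ¬ l.Nodup) :
    ∃ (s : List α) (b : α) (t : List α), l = s ++ b :: t ∧ b ∈ t := by
  induction l with
  | nil => simp at h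
  | cons x xs ih =>
    by_cases hx : x ∈ xs
    · exact ⟨[], x, xs, rfl, hx⟩
    · have : ¬ xs.Nodup := fun hn => h (List.nodup_cons.2 ⟨hx, hn⟩)
      obtain ⟨s, b, t, rfl, hb⟩ := ih this
      exact ⟨x :: s, b, t, rfl, hb⟩

lemma exists_simple_cycle :
    ∀ (n : ℕ) (a : α) (l : List α), l.length ≤ n → l ≠ [] → List.Chain R a l →
      (a :: l).getLast? = some a →
      ∃ c : List α, c ≠ [] ∧ c.Nodup ∧ c.Chain' R ∧
        ∀ x ∈ c.getLast?, ∀ y ∈ c.head?, R x y := by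
  intro n
  induction n with
  | zero =>
    intro a l hlen hne _ _
    exact absurd (List.length_eq_zero_iff.1 (Nat.le_zero.1 hlen)) hne
  | succ n ih =>
    intro a l hlen hne hch hlast
    have hlast' : l.getLast hne = a := by
      rw [List.getLast?_eq_getLast_of_ne_nil (l := a :: l) (by simp)] at hlast
      have := Option.some.inj hlast
      rwa [List.getLast_cons hne] at this
    have hdecomp : a :: l = (a :: l.dropLast) ++ [a] := by
      conv_lhs => rw [← List.dropLast_append_getLast hne, hlast']
      simp
    have hch' : List.Chain' R ((a :: l.dropLast) ++ [a]) := by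
      rw [← hdecomp]; exact hch
    obtain ⟨hc1, _, hwrap0⟩ := List.isChain_append.1 hch'
    set c : List α := a :: l.dropLast with hc
    have hcwrap : ∀ x ∈ c.getLast?, ∀ y ∈ c.head?, R x y := by
      intro x hx y hy
      simp only [hc, List.head?_cons, Option.mem_def, Option.some.injEq] at hy
      subst hy
      exact hwrap0 x hx a (by simp)
    by_cases hnd : c.Nodup
    · exact ⟨c, by simp [hc], hnd, hc1, hcwrap⟩
    · obtain ⟨s, b, t, hst, hbt⟩ := exists_dup_split hnd
      obtain ⟨t₁, t₂, rfl⟩ := List.append_of_mem hbt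
      have hchb : List.Chain R b (t₁ ++ [b]) := by
        have h2 : List.Chain' R (b :: (t₁ ++ b :: t₂)) := by
          have := hc1; rw [hst] at this
          exact this.right_of_append
        exact (List.isChain_cons_split.1 h2).1
      have hlenb : (t₁ ++ [b]).length ≤ n := by
        have hclen : c.length = l.length := by
          simp [hc, List.length_dropLast, Nat.sub_add_cancel (List.length_pos_iff.2 hne)]
        have : c.length = s.length + (t₁.length + t₂.length + 2) := by
          rw [hst]; simp; omega
        simp only [List.length_append, List.length_singleton]
        omega
      have hlastb : (b :: (t₁ ++ [b])).getLast? = some b := by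
        rw [← List.cons_append, List.getLast?_concat]
      exact ih b (t₁ ++ [b]) hlenb (by simp) hchb hlastb

end CycleExtract



/-- A (possibly partial) allocation: bundles of distinct agents are pairwise disjoint. -/
def IsAlloc {N M : Type*} [DecidableEq M] (X : N → Finset M) : Prop :=
  ∀ i j : N, i ≠ j → Disjoint (X i) (X j)

/-- A good is unallocated if it belongs to no agent's bundle. -/
def Unallocated {N M : Type*} (X : N → Finset M) (g : M) : Prop :=
  ∀ i, g ∉ X i

/-- Agent `i` envies agent `j` under allocation `X`. -/
def Envies {N M : Type*} (v : N → Finset M → ℝ) (X : N → Finset M) (i j : N) : Prop :=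
  v i (X i) < v i (X j)

/-- Agent `i` envies a bundle `S` under allocation `X`. -/
def EnviesSet {N M : Type*} (v : N → Finset M → ℝ) (X : N → Finset M) (i : N)
    (S : Finset M) : Prop :=
  v i (X i) < v i S

/-- Agent `i` strongly envies agent `j`: removing some good of `X j` still leaves
a bundle that `i` prefers to her own. -/
def StrongEnvies {N M : Type*} [DecidableEq M] (v : N → Finset M → ℝ)
    (X : N → Finset M) (i j : N) : Prop :=
  ∃ g ∈ X j, v i (X i) < v i (X j \ {g})

/-- An allocation is EFX if no agent strongly envies another. -/
def EFX {N M : Type*} [DecidableEq M] (v : N → Finset M → ℝ) (X : N → Finset M) : Prop :=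
  ∀ i j : N, ¬ StrongEnvies v X i j

/-- `Y` Pareto dominates `X`. -/
def ParetoDom {N M : Type*} (v : N → Finset M → ℝ) (Y X : N → Finset M) : Prop :=
  (∀ i, v i (X i) ≤ v i (Y i)) ∧ ∃ j, v j (X j) < v j (Y j)

/-- `T` is a minimally envied subset of `S` with respect to the reference bundle `R`
for agent `i`: a minimum-cardinality subset of `S` that `i` values above `R`. -/
def IsMES {N M : Type*} (v : N → Finset M → ℝ) (i : N) (S R T : Finset M) : Prop :=
  T ⊆ S ∧ v i R < v i T ∧ ∀ T' ⊆ S, v i R < v i T' → T.card ≤ T'.card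

/-- Agent `i` champions the bundle `S`: `i` envies `S` and, among all agents envying `S`,
`i` has a minimally envied subset of minimum cardinality. -/
def Champions {N M : Type*} [DecidableEq M] (v : N → Finset M → ℝ) (X : N → Finset M)
    (i : N) (S : Finset M) : Prop :=
  EnviesSet v X i S ∧
    ∃ T, IsMES v i S (X i) T ∧
      ∀ j T', EnviesSet v X j S → IsMES v j S (X j) T' → T.card ≤ T'.card

/-- Agent `i` `g`-champions agent `j` if `i` champions `X j ∪ {g}`. -/
def GChampions {N M : Type*} [DecidableEq M] (v : N → Finset M → ℝ) (X : N → Finset M)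
    (g : M) (i j : N) : Prop :=
  Champions v X i (insert g (X j))

/-- Non-degenerate instance: no agent values two distinct bundles equally. -/
def NonDeg {N M : Type*} (v : N → Finset M → ℝ) : Prop :=
  ∀ i : N, ∀ S T : Finset M, S ≠ T → v i S ≠ v i T

/-- If the envy graph of an EFX allocation `X` has a directed
cycle, then some EFX allocation `Y` of the same goods Pareto dominates `X`. -/
theorem stmt2 {N M : Type*} [Fintype N] [Fintype M] [DecidableEq M]
    (v : N → Finset M → ℝ) (hv0 : ∀ i, v i (∅ : Finset M) = 0)
    (hnd : NonDeg v)
    (X : N → Finset M) (hX : IsAlloc X) (hEFX : EFX v X)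
    (hcyc : ∃ i : N, Relation.TransGen (Envies v X) i i) :
    ∃ Y : N → Finset M, IsAlloc Y ∧
      Finset.univ.biUnion Y = Finset.univ.biUnion X ∧
      EFX v Y ∧ ParetoDom v Y X := by
  classical
  classical
  obtain ⟨i0, hc⟩ := hcyc
  obtain ⟨l, hne, hch, hlast⟩ := transGen_chain hc
  obtain ⟨c, hcne, hnodup, hchain, hwrap⟩ :=
    exists_simple_cycle l.length i0 l le_rfl hne hch hlast
  have hLpos : 0 < c.length := List.length_pos_iff.2 hcne
  have hstep : ∀ (k : ℕ) (hk : k < c.length),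
      Envies v X (c.get ⟨k, hk⟩)
        (c.get ⟨(k + 1) % c.length, Nat.mod_lt _ hLpos⟩) := by
    intro k hk
    rcases Nat.lt_or_ge (k + 1) c.length with h1 | h1
    · have he : (k + 1) % c.length = k + 1 := Nat.mod_eq_of_lt h1
      simp only [he]
      exact List.isChain_iff_getElem.1 hchain k (by omega)
    · have hkeq : k = c.length - 1 := by omega
      have he : (k + 1) % c.length = 0 := by
        have : k + 1 = c.length := by omega
        simp [this]
      have h1' : c.getLast? = some (c.get ⟨k, hk⟩) := by
        rw [List.getLast?_eq_getLast_of_ne_nil hcne, List.getLast_eq_getElem]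
        simp [hkeq]
      have h2' : c.head? = some (c.get ⟨(k + 1) % c.length, Nat.mod_lt _ hLpos⟩) := by
        rw [List.head?_eq_head hcne, List.head_eq_getElem_zero hcne]
        simp [he]
      exact hwrap _ (by simp [h1']) _ (by simp [h2'])
  set L := c.length with hL
  set f : N → N :=
    fun i => if h : i ∈ c then c.get ⟨(c.idxOf i + 1) % L, Nat.mod_lt _ hLpos⟩ else i
    with hf
  have hfmem : ∀ i ∈ c, f i ∈ c := by
    intro i hi
    simp only [hf, dif_pos hi]
    exact List.get_mem _ _
  have hfenv : ∀ i ∈ c, Envies v X i (f i) := by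
    intro i hi
    have hn : c.idxOf i < L := List.idxOf_lt_length_iff.2 hi
    have := hstep (c.idxOf i) hn
    rw [List.idxOf_get hn] at this
    simpa only [hf, dif_pos hi] using this
  have hfid : ∀ i, i ∉ c → f i = i := fun i hi => by simp only [hf, dif_neg hi]
  have hmod : ∀ a b : ℕ, a < L → b < L → (a + 1) % L = (b + 1) % L → a = b := by
    intro a b ha hb h
    rcases Nat.lt_or_ge (a + 1) L with h1 | h1 <;> rcases Nat.lt_or_ge (b + 1) L with h2 | h2
    · rw [Nat.mod_eq_of_lt h1, Nat.mod_eq_of_lt h2] at h; omega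
    · have hb1 : b + 1 = L := by omega
      rw [Nat.mod_eq_of_lt h1, hb1, Nat.mod_self] at h; omega
    · have ha1 : a + 1 = L := by omega
      rw [Nat.mod_eq_of_lt h2, ha1, Nat.mod_self] at h; omega
    · omega
  have hinj : Function.Injective f := by
    intro i j hij
    by_cases hi : i ∈ c <;> by_cases hj : j ∈ c
    · simp only [hf, dif_pos hi, dif_pos hj] at hij
      have hni : c.idxOf i < L := List.idxOf_lt_length_iff.2 hi
      have hnj : c.idxOf j < L := List.idxOf_lt_length_iff.2 hj
      have := (hnodup.get_inj_iff).1 hij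
      have heq : c.idxOf i = c.idxOf j :=
        hmod _ _ hni hnj (congrArg Fin.val this)
      rw [← List.idxOf_get hni, ← List.idxOf_get hnj]
      simp [heq]
    · exact absurd (hij ▸ hfmem i hi) (by rw [hfid j hj]; exact hj)
    · exact absurd (hij.symm ▸ hfmem j hj) (by rw [hfid i hi]; exact hi)
    · rwa [hfid i hi, hfid j hj] at hij
  have hsurj : Function.Surjective f := Finite.surjective_of_injective hinj
  refine ⟨fun i => X (f i), ?_, ?_, ?_, ?_, ?_⟩
  · intro i j hij
    exact hX (f i) (f j) fun h => hij (hinj h)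
  · conv_rhs => rw [← Finset.image_univ_of_surjective hsurj, Finset.image_biUnion]
  · intro i j ⟨g, hg, hlt⟩
    have hge : v i (X i) ≤ v i (X (f i)) := by
      by_cases hi : i ∈ c
      · exact le_of_lt (hfenv i hi)
      · rw [hfid i hi]
    exact hEFX i (f j) ⟨g, hg, lt_of_le_of_lt hge hlt⟩
  · intro i
    show v i (X i) ≤ v i (X (f i))
    by_cases hi : i ∈ c
    · exact le_of_lt (hfenv i hi)
    · rw [hfid i hi]
  · exact ⟨c.head hcne, hfenv _ (List.head_mem hcne)⟩
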